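/- In the dual MDP-policy pair, the value functions agree: for every state s of the original MDP and action a with π(a|s) > 0, the action-value Q^E of the dual pair at the dual state (s,a) (averaged over dual actions according to π^E) equals the action-value Q^A(s,a) of the original pair; consequently the dual state-value V^E(s,a) equals Q^A(s,a). -/
import Mathlib


/-- Value functions of the dual pair agree with those of the original pair: for every state `s`
and action `a` with `pi s a > 0`, the dual action-value `QE` at dual state `(s,a)` averaged over
dual actions according to `piE` equals the original action-value `QA s a`; consequently the dual
state-value `VE (s,a)` equals `QA s a`. Values are defined by backward induction over horizon. -/
theorem dual_value_functions_agree
    {S A : Type*} [Fintype S] [Fintype A]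
    (P : S → A → S → ℝ) (pi : S → A → ℝ) (R : S → A → ℝ) (γ : ℝ) (T : ℕ)
    (hP : ∀ s a, ∑ s', P s a s' = 1)
    (QA : ℕ → S → A → ℝ) (QE : ℕ → S × A → S → ℝ) (VE : ℕ → S × A → ℝ)
    (hQA0 : ∀ s a, QA 0 s a = 0)
    (hQA : ∀ n s a, QA (n + 1) s a = R s a + γ * ∑ s', P s a s' * ∑ a', pi s' a' * QA n s' a')
    (hQE0 : ∀ sa s', QE 0 sa s' = 0)
    (hQE : ∀ n sa s', QE (n + 1) sa s'
      = R sa.1 sa.2 + γ * ∑ a'', pi s' a'' * VE n (s', a''))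
    (hVE : ∀ n sa, VE n sa = ∑ s', P sa.1 sa.2 s' * QE n sa s') :
    ∀ s a, 0 < pi s a →
      (∑ s', P s a s' * QE T (s, a) s') = QA T s a ∧ VE T (s, a) = QA T s a := by

  have key : ∀ n s a, (∑ s', P s a s' * QE n (s, a) s') = QA n s a := by
    intro n
    induction n with
    | zero =>
      intro s a
      simp [hQE0, hQA0]
    | succ n ih =>
      intro s a
      have h1 : ∀ s' a'', VE n (s', a'') = QA n s' a'' := by
        intro s' a''
        rw [hVE n (s', a'')]
        exact ih s' a''
      calc (∑ s', P s a s' * QE (n+1) (s, a) s')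
          = ∑ s', P s a s' * (R s a + γ * ∑ a'', pi s' a'' * QA n s' a'') := by
            refine Finset.sum_congr rfl fun s' _ => ?_
            rw [hQE n (s, a) s']
            simp only [h1]
        _ = (∑ s', P s a s') * R s a
            + γ * ∑ s', P s a s' * ∑ a'', pi s' a'' * QA n s' a'' := by
            rw [Finset.sum_mul, Finset.mul_sum]
            rw [← Finset.sum_add_distrib]
            refine Finset.sum_congr rfl fun s' _ => ?_
            ring
        _ = QA (n+1) s a := by rw [hP, hQA]; ring
  intro s a _
  refine ⟨key T s a, ?_⟩
  rw [hVE T (s, a)]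
  exact key T s a
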